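/- For all natural numbers n, m with n + m ≥ 3, the equation x₁ + x₂ + ⋯ + x_n = y₁·y₂·⋯·y_m is injectively partition regular on ℕ: for every finite coloring of the positive integers there are pairwise distinct monochromatic positive integers x₁,…,x_n, y₁,…,y_m with ∑ x_i = ∏ y_j. -/

import Mathlib

open Filter Hindman

attribute [local instance] Ultrafilter.mul Ultrafilter.add
  Ultrafilter.semigroup Ultrafilter.addSemigroup

namespace Stmt18Aux

/-- Partial sums of a stream of positive naturals. -/
def psum (a : Stream' ℕ+) : ℕ → ℕ+
  | 0 => a.head
  | (K+1) => a.head + psum a.tail K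

lemma psum_mem_FS (a : Stream' ℕ+) (K : ℕ) : psum a K ∈ FS a := by
  induction K generalizing a with
  | zero => exact FS.head a
  | succ K ih => exact FS.cons a _ (ih a.tail)

lemma lt_psum (a : Stream' ℕ+) (K : ℕ) : K < (psum a K : ℕ) := by
  induction K generalizing a with
  | zero => exact (psum a 0).2
  | succ K ih =>
    have h1 : 1 ≤ (a.head : ℕ) := a.head.2
    have := ih a.tail
    show K + 1 < ((a.head + psum a.tail K : ℕ+) : ℕ)
    push_cast
    omega

lemma exists_large_FS (a : Stream' ℕ+) (L : ℕ) : ∃ x ∈ FS a, L < (x : ℕ) :=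
  ⟨psum a L, psum_mem_FS a L, lt_psum a L⟩

lemma FS_map (x : ℕ+) : ∀ {c : Stream' ℕ+} {v : ℕ+}, v ∈ FS c →
    ∀ b : Stream' ℕ+, c = b.map (x * ·) → ∃ w ∈ FS b, v = x * w := by
  intro c v h
  induction h with
  | head' a =>
    rintro b rfl
    exact ⟨b.head, FS.head b, (Stream'.head_map _ b)⟩
  | tail' a m h ih =>
    rintro b rfl
    obtain ⟨w, hw, rfl⟩ := ih b.tail (Stream'.map_tail _ b).symm
    exact ⟨w, FS.tail b w hw, rfl⟩
  | cons' a m h ih =>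
    rintro b rfl
    obtain ⟨w, hw, rfl⟩ := ih b.tail (Stream'.map_tail _ b).symm
    refine ⟨b.head + w, FS.cons b w hw, ?_⟩
    rw [Stream'.head_map, mul_add]

/-- A set of positive naturals is an additive IP set. -/
def IP (A : Set ℕ+) : Prop := ∃ a : Stream' ℕ+, FS a ⊆ A

/-- The set of ultrafilters all of whose members are additively IP. -/
def Gam : Set (Ultrafilter ℕ+) := { U | ∀ A : Set ℕ+, A ∈ U → IP A }

lemma Gam_nonempty : Gam.Nonempty := by
  obtain ⟨V, hV⟩ := exists_idempotent_of_compact_t2_of_continuous_add_left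
    (@Ultrafilter.continuous_add_left ℕ+ _)
  exact ⟨V, fun A hA => exists_FS_of_large V hV A hA⟩

lemma Gam_closed : IsClosed Gam := by
  rw [← isOpen_compl_iff, isOpen_iff_forall_mem_open]
  intro U hU
  simp only [Set.mem_compl_iff, Gam, Set.mem_setOf_eq, not_forall] at hU
  obtain ⟨A, hA, hnIP⟩ := hU
  refine ⟨{ W : Ultrafilter ℕ+ | A ∈ W }, ?_, ultrafilter_isOpen_basic A, hA⟩
  intro W hW hWG
  exact hnIP (hWG A hW)

lemma Gam_mul {U V : Ultrafilter ℕ+} (hU : U ∈ Gam) (hV : V ∈ Gam) : U * V ∈ Gam := by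
  intro A hA
  have h : ∀ᶠ x in U, ∀ᶠ y in V, x * y ∈ A := (Ultrafilter.eventually_mul U V (· ∈ A)).mp hA
  obtain ⟨x, hx⟩ := U.nonempty_of_mem (Filter.eventually_iff.mp h)
  have hB : { y : ℕ+ | x * y ∈ A } ∈ V := hx
  obtain ⟨b, hb⟩ := hV _ hB
  refine ⟨b.map (x * ·), fun v hv => ?_⟩
  obtain ⟨w, hw, rfl⟩ := FS_map x hv b rfl
  exact hb hw

lemma exists_p : ∃ p : Ultrafilter ℕ+, p * p = p ∧ p ∈ Gam := by
  obtain ⟨p, hp, hpp⟩ := exists_idempotent_in_compact_subsemigroup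
    (@Ultrafilter.continuous_mul_left ℕ+ _) Gam Gam_nonempty
    Gam_closed.isCompact (fun x hx y hy => Gam_mul hx hy)
  exact ⟨p, hpp, hp⟩

/-- The star set of `A` w.r.t. an idempotent ultrafilter. -/
def st (p : Ultrafilter ℕ+) (A : Set ℕ+) : Set ℕ+ :=
  A ∩ { x | { y | x * y ∈ A } ∈ p }

lemma st_subset (p : Ultrafilter ℕ+) (A : Set ℕ+) : st p A ⊆ A := Set.inter_subset_left

lemma st_mem {p : Ultrafilter ℕ+} (hp : p * p = p) {A : Set ℕ+} (hA : A ∈ p) : st p A ∈ p := by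
  refine Filter.inter_mem hA ?_
  have h2 : A ∈ p * p := by rw [hp]; exact hA
  have h := (Ultrafilter.eventually_mul p p (· ∈ A)).mp h2
  exact Filter.eventually_iff.mp h

lemma st_step {p : Ultrafilter ℕ+} (hp : p * p = p) {A : Set ℕ+} {x : ℕ+} (hx : x ∈ st p A) :
    { y | x * y ∈ st p A } ∈ p := by
  have hB : { y : ℕ+ | x * y ∈ A } ∈ p := hx.2
  have hB2 : { y : ℕ+ | x * y ∈ A } ∈ p * p := by rw [hp]; exact hB
  have hC := Filter.eventually_iff.mp
    ((Ultrafilter.eventually_mul p p (· ∈ { y : ℕ+ | x * y ∈ A })).mp hB2)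
  filter_upwards [hB, hC] with y hy1 hy2
  refine ⟨hy1, ?_⟩
  have : { z : ℕ+ | y * z ∈ { w : ℕ+ | x * w ∈ A } } = { z : ℕ+ | x * y * z ∈ A } := by
    ext z; simp [Set.mem_setOf_eq, mul_assoc]
  rw [Set.mem_setOf_eq, ← this]
  exact Filter.eventually_iff.mp hy2



lemma pnat_coe_prod {k : ℕ} (y : Fin k → ℕ+) : ((∏ i, y i : ℕ+) : ℕ) = ∏ i, (y i : ℕ) := by
  simpa using map_prod PNat.coeMonoidHom y Finset.univ

lemma sumchain (a : Stream' ℕ+) (q : ℕ) (k : ℕ) (N : ℕ) :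
    ∃ (u : Fin (k+1) → ℕ+) (T : ℕ+), (∀ i, u i ∈ FS a) ∧ T ∈ FS a ∧
      ((T : ℕ) = ∑ i, (u i : ℕ)) ∧ (∀ i j : Fin (k+1), i < j → q * (u i : ℕ) < (u j : ℕ)) ∧
      (∀ i, N < (u i : ℕ)) := by
  induction k with
  | zero =>
    refine ⟨fun _ => psum a N, psum a N, fun _ => psum_mem_FS a N, psum_mem_FS a N,
      by simp, fun i j hij => absurd hij ?_, fun _ => lt_psum a N⟩
    have hi := i.isLt; have hj := j.isLt
    rw [Fin.lt_def]; omega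
  | succ k ih =>
    obtain ⟨u, T, huFS, hTFS, hsum, hchain, hN⟩ := ih
    obtain ⟨d, hd⟩ := FS.add hTFS
    set K := max N (q * (u (Fin.last k) : ℕ)) with hK
    set z := psum (a.drop d) K with hz
    have hzFS : z ∈ FS a := FS_iter_tail_sub_FS a d (psum_mem_FS _ K)
    have hzbig : K < (z : ℕ) := lt_psum _ K
    have humax : ∀ i : Fin (k+1), q * (u i : ℕ) ≤ max (q * (u (Fin.last k) : ℕ)) (q * (u i : ℕ)) :=
      fun i => le_max_right _ _
    have hule : ∀ i : Fin (k+1), q * (u i : ℕ) < (z : ℕ) := by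
      intro i
      have h2 : q * (u (Fin.last k) : ℕ) ≤ K := le_max_right _ _
      rcases Nat.eq_zero_or_pos q with hq0 | hq0
      · simpa [hq0] using z.2
      · rcases eq_or_lt_of_le (Fin.le_last i) with h | h
        · have : q * (u i : ℕ) = q * (u (Fin.last k) : ℕ) := by rw [h]
          omega
        · have h1 := hchain i (Fin.last k) h
          have h3 : (u (Fin.last k) : ℕ) ≤ q * (u (Fin.last k) : ℕ) :=
            Nat.le_mul_of_pos_left _ hq0
          omega
    refine ⟨Fin.snoc u z, T + z, ?_, hd z (psum_mem_FS _ K), ?_, ?_, ?_⟩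
    · intro i
      refine Fin.lastCases ?_ ?_ i
      · rw [Fin.snoc_last]; exact hzFS
      · intro j; rw [Fin.snoc_castSucc]; exact huFS j
    · rw [Fin.sum_univ_castSucc]
      push_cast
      simp only [Fin.snoc_castSucc, Fin.snoc_last]
      omega
    · intro i j
      refine Fin.lastCases ?_ ?_ j
      · intro hij
        rw [Fin.snoc_last]
        have hine : i ≠ Fin.last (k+1) := Fin.ne_last_of_lt hij
        rw [← Fin.castSucc_castPred i hine, Fin.snoc_castSucc]
        exact hule _
      · intro j hij
        have hine : i ≠ Fin.last (k+1) :=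
          Fin.ne_last_of_lt (lt_of_lt_of_le hij (Fin.le_last _))
        rw [← Fin.castSucc_castPred i hine, Fin.snoc_castSucc, Fin.snoc_castSucc]
        apply hchain
        rw [Fin.lt_def] at hij ⊢
        rw [Fin.coe_castPred]
        simpa using hij
    · intro i
      refine Fin.lastCases ?_ ?_ i
      · rw [Fin.snoc_last]
        have : N ≤ K := le_max_left _ _
        omega
      · intro j; rw [Fin.snoc_castSucc]; exact hN j



lemma exists_large_mem {p : Ultrafilter ℕ+} (hpG : p ∈ Gam) {B : Set ℕ+} (hB : B ∈ p) (L : ℕ) :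
    ∃ x ∈ B, L < (x : ℕ) := by
  obtain ⟨a, ha⟩ := hpG B hB
  obtain ⟨x, hx, hxL⟩ := exists_large_FS a L
  exact ⟨x, ha hx, hxL⟩

lemma prodchain {p : Ultrafilter ℕ+} (hpp : p * p = p) (hpG : p ∈ Gam)
    {A : Set ℕ+} (hA : A ∈ p) (k : ℕ) (L : ℕ) :
    ∃ y : Fin (k+1) → ℕ+, (∀ i j : Fin (k+1), i < j → (y i : ℕ) < (y j : ℕ)) ∧
      (∀ i, y i ∈ st p A) ∧ (∀ i, L < (y i : ℕ)) ∧ (∏ i, y i) ∈ st p A := by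
  induction k with
  | zero =>
    obtain ⟨z, hz, hzL⟩ := exists_large_mem hpG (st_mem hpp hA) L
    refine ⟨fun _ => z, ?_, fun _ => hz, fun _ => hzL, by simpa using hz⟩
    intro i j hij
    have hi := i.isLt; have hj := j.isLt
    rw [Fin.lt_def] at hij; omega
  | succ k ih =>
    obtain ⟨y, hymono, hyst, hyL, hPst⟩ := ih
    set P := ∏ i, y i with hP
    have hW : st p A ∩ { w | P * w ∈ st p A } ∈ p :=
      Filter.inter_mem (st_mem hpp hA) (st_step hpp hPst)
    obtain ⟨z, hz, hzL⟩ := exists_large_mem hpG hW (max L (P : ℕ))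
    have hyleP : ∀ i, (y i : ℕ) ≤ (P : ℕ) := by
      intro i
      rw [hP, pnat_coe_prod]
      exact Finset.single_le_prod' (f := fun j => ((y j : ℕ))) (fun j _ => (y j).2) (Finset.mem_univ i)
    refine ⟨Fin.snoc y z, ?_, ?_, ?_, ?_⟩
    · intro i j
      refine Fin.lastCases ?_ ?_ j
      · intro hij
        rw [Fin.snoc_last]
        have hine : i ≠ Fin.last (k+1) := Fin.ne_last_of_lt hij
        rw [← Fin.castSucc_castPred i hine, Fin.snoc_castSucc]
        have := hyleP (i.castPred hine)
        omega
      · intro j hij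
        have hine : i ≠ Fin.last (k+1) :=
          Fin.ne_last_of_lt (lt_of_lt_of_le hij (Fin.le_last _))
        rw [← Fin.castSucc_castPred i hine, Fin.snoc_castSucc, Fin.snoc_castSucc]
        apply hymono
        rw [Fin.lt_def] at hij ⊢
        rw [Fin.coe_castPred]
        simpa using hij
    · intro i
      refine Fin.lastCases ?_ ?_ i
      · rw [Fin.snoc_last]; exact hz.1
      · intro j; rw [Fin.snoc_castSucc]; exact hyst j
    · intro i
      refine Fin.lastCases ?_ ?_ i
      · rw [Fin.snoc_last]; omega
      · intro j; rw [Fin.snoc_castSucc]; exact hyL j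
    · rw [Fin.prod_univ_castSucc]
      simp only [Fin.snoc_castSucc, Fin.snoc_last]
      exact hz.2




lemma inj_of_chain {k : ℕ} {f : Fin k → ℕ} (h : ∀ i j, i < j → f i < f j)
    {i j : Fin k} (hf : f i = f j) : i = j := by
  rcases lt_trichotomy i j with h' | h' | h'
  · exact absurd hf (Nat.ne_of_lt (h i j h'))
  · exact h'
  · exact absurd hf.symm (Nat.ne_of_lt (h j i h'))

end Stmt18Aux

theorem stmt18 (n m : ℕ) (hn : 0 < n) (hm : 0 < m) (hnm : 3 ≤ n + m)
    (r : ℕ) (col : ℕ → Fin r) :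
    ∃ (x : Fin n → ℕ) (y : Fin m → ℕ),
      (∀ i, 0 < x i) ∧ (∀ j, 0 < y j) ∧
      Function.Injective (Sum.elim x y) ∧
      (∃ k : Fin r, (∀ i, col (x i) = k) ∧ (∀ j, col (y j) = k)) ∧
      (∑ i, x i) = (∏ j, y j) := by
  classical
  obtain ⟨p, hpp, hpG⟩ := Stmt18Aux.exists_p
  have hex : ∃ k : Fin r, { z : ℕ+ | col (z : ℕ) = k } ∈ p := by
    by_contra h
    push_neg at h
    have h2 : ∀ k : Fin r, { z : ℕ+ | col (z : ℕ) = k }ᶜ ∈ p := fun k =>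
      Ultrafilter.compl_mem_iff_notMem.mpr (h k)
    have h3 : (⋂ k : Fin r, { z : ℕ+ | col (z : ℕ) = k }ᶜ) ∈ p := Filter.iInter_mem.mpr h2
    obtain ⟨z, hz⟩ := p.nonempty_of_mem h3
    exact Set.mem_iInter.mp hz (col (z : ℕ)) rfl
  obtain ⟨k, hA⟩ := hex
  set A := { z : ℕ+ | col (z : ℕ) = k } with hAdef
  obtain _ | n'' := n
  · omega
  obtain _ | m' := m
  · omega
  obtain _ | m' := m'
  · -- m = 1, so n = n'' + 1 ≥ 2
    have hn2 : 1 ≤ n'' := by omega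
    obtain ⟨a, haA⟩ := hpG A hA
    obtain ⟨u, T, huFS, hTFS, hsum, hchain, hN⟩ := Stmt18Aux.sumchain a 1 n'' 0
    have hchain' : ∀ i j : Fin (n'' + 1), i < j → (u i : ℕ) < (u j : ℕ) := by
      intro i j hij
      have := hchain i j hij
      omega
    have hlt : ∀ i, (u i : ℕ) < (T : ℕ) := by
      intro i
      have heq : (u i : ℕ) + ∑ x ∈ Finset.univ.erase i, (u x : ℕ)
          = ∑ x : Fin (n'' + 1), (u x : ℕ) :=
        Finset.add_sum_erase Finset.univ (fun j => ((u j : ℕ))) (Finset.mem_univ i)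
      have hcard : (Finset.univ.erase i).Nonempty := by
        rw [← Finset.card_pos, Finset.card_erase_of_mem (Finset.mem_univ i),
          Finset.card_univ, Fintype.card_fin]
        omega
      obtain ⟨j, hj⟩ := hcard
      have hpos : 0 < ∑ x ∈ Finset.univ.erase i, (u x : ℕ) :=
        Finset.sum_pos' (fun _ _ => Nat.zero_le _) ⟨j, hj, (u j).2⟩
      rw [hsum]
      omega
    refine ⟨fun i => (u i : ℕ), fun _ => (T : ℕ), fun i => (u i).2, fun _ => T.2, ?_, ⟨k, ?_, ?_⟩, ?_⟩
    · intro s t hst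
      match s, t with
      | Sum.inl i, Sum.inl j =>
        simp only [Sum.elim_inl] at hst
        exact congrArg Sum.inl (Stmt18Aux.inj_of_chain hchain' hst)
      | Sum.inl i, Sum.inr j =>
        simp only [Sum.elim_inl, Sum.elim_inr] at hst
        exact absurd hst (Nat.ne_of_lt (hlt i))
      | Sum.inr i, Sum.inl j =>
        simp only [Sum.elim_inl, Sum.elim_inr] at hst
        exact absurd hst.symm (Nat.ne_of_lt (hlt j))
      | Sum.inr i, Sum.inr j =>
        refine congrArg Sum.inr (Fin.ext ?_)
        have := i.isLt; have := j.isLt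
        omega
    · intro i
      exact haA (huFS i)
    · intro j
      exact haA hTFS
    · simp [← hsum]
  · -- m = m' + 2
    obtain ⟨y', hymono, hyst, hyL, hqst⟩ := Stmt18Aux.prodchain hpp hpG hA m' (n'' + 2)
    set q := ∏ i, y' i with hq
    have hq1 : 1 ≤ (q : ℕ) := q.2
    have hyleq : ∀ i, (y' i : ℕ) ≤ (q : ℕ) := by
      intro i
      rw [hq, Stmt18Aux.pnat_coe_prod]
      exact Finset.single_le_prod' (f := fun j => ((y' j : ℕ))) (fun j _ => (y' j).2) (Finset.mem_univ i)
    have hqn : n'' + 2 < (q : ℕ) := lt_of_lt_of_le (hyL 0) (hyleq 0)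
    have hD : A ∩ { z : ℕ+ | q * z ∈ A } ∈ p := Filter.inter_mem hA hqst.2
    obtain ⟨a, haD⟩ := hpG _ hD
    obtain ⟨u, T, huFS, hTFS, hsum, hchain, hN⟩ := Stmt18Aux.sumchain a (q : ℕ) n'' (q : ℕ)
    have huD : ∀ i, u i ∈ A ∩ { z : ℕ+ | q * z ∈ A } := fun i => haD (huFS i)
    have hTD : T ∈ A ∩ { z : ℕ+ | q * z ∈ A } := haD hTFS
    have huleT : ∀ i, (u i : ℕ) ≤ (T : ℕ) := by
      intro i
      rw [hsum]
      exact Finset.single_le_sum (f := fun j : Fin (n'' + 1) => ((u j : ℕ)))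
        (fun j _ => Nat.zero_le _) (Finset.mem_univ i)
    have hxmono : ∀ i j : Fin (n'' + 1), i < j →
        (q : ℕ) * (u i : ℕ) < (q : ℕ) * (u j : ℕ) := by
      intro i j hij
      have h1 := hchain i j hij
      have h2 : (u j : ℕ) ≤ (q : ℕ) * (u j : ℕ) := Nat.le_mul_of_pos_left _ q.2
      omega
    have hy'T : ∀ j, (y' j : ℕ) < (T : ℕ) := by
      intro j
      have h1 := hN 0
      have h2 := huleT 0
      have := hyleq j
      omega
    have hy'x : ∀ j i, (y' j : ℕ) < (q : ℕ) * (u i : ℕ) := by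
      intro j i
      have h1 := hN i
      have h2 : (q : ℕ) * 1 < (q : ℕ) * (u i : ℕ) := by
        refine (Nat.mul_lt_mul_left q.2).mpr ?_
        have h3 := hN i
        omega
      have := hyleq j
      omega
    have hTx : ∀ i, (T : ℕ) ≠ (q : ℕ) * (u i : ℕ) := by
      intro i
      rcases eq_or_lt_of_le (Fin.le_last i) with hlast | hlast
      · -- i = last : T ≤ (n''+1) * u_last < q * u_last
        have hle : ∀ j : Fin (n'' + 1), (u j : ℕ) ≤ (u (Fin.last n'') : ℕ) := by
          intro j
          rcases eq_or_lt_of_le (Fin.le_last j) with h | h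
          · rw [h]
          · have h1 := hchain j (Fin.last n'') h
            have h2 : (u j : ℕ) ≤ (q : ℕ) * (u j : ℕ) := Nat.le_mul_of_pos_left _ q.2
            omega
        have hsle : (T : ℕ) ≤ (n'' + 1) * (u (Fin.last n'') : ℕ) := by
          rw [hsum]
          calc ∑ j, (u j : ℕ) ≤ ∑ _j : Fin (n'' + 1), (u (Fin.last n'') : ℕ) :=
                Finset.sum_le_sum (fun j _ => hle j)
            _ = (n'' + 1) * (u (Fin.last n'') : ℕ) := by
                rw [Finset.sum_const, Finset.card_univ, Fintype.card_fin, smul_eq_mul]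
        have hlt2 : (n'' + 1) * (u (Fin.last n'') : ℕ) < (q : ℕ) * (u (Fin.last n'') : ℕ) :=
          (Nat.mul_lt_mul_right (u (Fin.last n'')).2).mpr (by omega)
        rw [hlast]
        omega
      · -- i < last : q * u i < u last ≤ T
        have h1 := hchain i (Fin.last n'') hlast
        have h2 := huleT (Fin.last n'')
        omega
    refine ⟨fun i => ((q * u i : ℕ+) : ℕ), Fin.cons (T : ℕ) (fun j => (y' j : ℕ)),
      fun i => (q * u i).2, ?_, ?_, ⟨k, ?_, ?_⟩, ?_⟩
    · intro j
      refine Fin.cases ?_ ?_ j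
      · simp [T.2]
      · intro j'
        simp [(y' j').2]
    · intro s t hst
      match s, t with
      | Sum.inl i, Sum.inl j =>
        simp only [Sum.elim_inl, PNat.mul_coe] at hst
        exact congrArg Sum.inl (Stmt18Aux.inj_of_chain hxmono hst)
      | Sum.inl i, Sum.inr j =>
        simp only [Sum.elim_inl, Sum.elim_inr] at hst
        exfalso
        revert hst
        refine Fin.cases ?_ ?_ j
        · rw [Fin.cons_zero, PNat.mul_coe]
          exact fun hst => (hTx i) hst.symm
        · intro j'
          rw [Fin.cons_succ, PNat.mul_coe]
          exact fun hst => absurd hst.symm (Nat.ne_of_lt (hy'x j' i))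
      | Sum.inr i, Sum.inl j =>
        simp only [Sum.elim_inl, Sum.elim_inr] at hst
        exfalso
        revert hst
        refine Fin.cases ?_ ?_ i
        · rw [Fin.cons_zero, PNat.mul_coe]
          exact fun hst => (hTx j) hst
        · intro i'
          rw [Fin.cons_succ, PNat.mul_coe]
          exact fun hst => absurd hst (Nat.ne_of_lt (hy'x i' j))
      | Sum.inr i, Sum.inr j =>
        simp only [Sum.elim_inr] at hst
        refine congrArg Sum.inr ?_
        revert hst
        refine Fin.cases ?_ ?_ i
        · refine Fin.cases ?_ ?_ j
          · intro _; rfl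
          · intro j' hst
            rw [Fin.cons_zero, Fin.cons_succ] at hst
            exact absurd hst.symm (Nat.ne_of_lt (hy'T j'))
        · intro i'
          refine Fin.cases ?_ ?_ j
          · intro hst
            rw [Fin.cons_zero, Fin.cons_succ] at hst
            exact absurd hst (Nat.ne_of_lt (hy'T i'))
          · intro j' hst
            rw [Fin.cons_succ, Fin.cons_succ] at hst
            exact congrArg Fin.succ
              (Stmt18Aux.inj_of_chain (f := fun t => ((y' t : ℕ))) hymono hst)
    · intro i
      exact (huD i).2
    · intro j
      refine Fin.cases ?_ ?_ j
      · exact hTD.1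
      · intro j'
        exact (hyst j').1
    · -- sum = product
      have hL : ∑ i : Fin (n'' + 1), ((q * u i : ℕ+) : ℕ) = (q : ℕ) * (T : ℕ) := by
        simp only [PNat.mul_coe]
        rw [← Finset.mul_sum, ← hsum]
      have hR : ∏ j : Fin (m' + 2), (Fin.cons (T : ℕ) (fun j' => (y' j' : ℕ)) : Fin (m' + 2) → ℕ) j
          = (T : ℕ) * (q : ℕ) := by
        rw [Fin.prod_cons, hq, Stmt18Aux.pnat_coe_prod]
      rw [hL, hR, Nat.mul_comm]
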